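/- Let (M, μ) be a probability space, 𝒢 a sub-σ-algebra, and A ∈ L²(μ). Suppose h₁, …, h_N ∈ L²(μ) are 𝒢-measurable with invertible Gram matrix G_{ij} = ⟨h_i, h_j⟩, and suppose A = Σ_{i=1}^N c_i h_i for functions c_i ∈ L∞(μ) whose conditional expectations E[c_i|𝒢] are a.e. constant. Then ‖E[A|𝒢]‖² = Σ_{i,j} ⟨A, h_i⟩ (G⁻¹)_{ij} ⟨A, h_j⟩. -/

import Mathlib

open MeasureTheory

/-- Saturation of the generalized Mazur bound via conditional expectation: if
`A = Σ cᵢ hᵢ` with `𝒢`-measurable `hᵢ ∈ L²` having invertible Gram matrix `G`, and the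
conditional expectations of the bounded coefficients `cᵢ` are a.e. constant, then
`‖E[A|𝒢]‖² = Σᵢⱼ ⟪A, hᵢ⟫ (G⁻¹)ᵢⱼ ⟪A, hⱼ⟫`. -/
theorem stmt_17 {M : Type*} {m0 : MeasurableSpace M} (μ : Measure M) [IsProbabilityMeasure μ]
    (m : MeasurableSpace M) (hm : m ≤ m0)
    {N : ℕ} (h : Fin N → M → ℝ) (hh2 : ∀ i, MemLp (h i) 2 μ)
    (hhmeas : ∀ i, StronglyMeasurable[m] (h i))
    (G : Matrix (Fin N) (Fin N) ℝ) (hG : ∀ i j, G i j = ∫ x, h i x * h j x ∂μ)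
    (hGinv : IsUnit G.det)
    (c : Fin N → M → ℝ) (hc : ∀ i, MemLp (c i) ⊤ μ)
    (hcconst : ∀ i, ∃ r : ℝ, μ[c i|m] =ᵐ[μ] fun _ => r)
    (A : M → ℝ) (hA : A = fun x => ∑ i, c i x * h i x) :
    ∫ x, ((μ[A|m]) x) ^ 2 ∂μ =
      ∑ i, ∑ j, (∫ x, A x * h i x ∂μ) * G⁻¹ i j * (∫ x, A x * h j x ∂μ) := by
  classical
  choose r hr using hcconst
  -- basic integrability facts
  have hch2 : ∀ i, MemLp (fun x => c i x * h i x) 2 μ := fun i =>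
    (hh2 i).smul (hc i)
  have hch : ∀ i, Integrable (fun x => c i x * h i x) μ := fun i =>
    (hch2 i).integrable one_le_two
  have hmul : ∀ i j, Integrable (fun x => h i x * h j x) μ := by
    intro i j
    have : MemLp (h i • h j) 1 μ := (hh2 j).smul (hh2 i) (hpqr := ⟨by simp [ENNReal.inv_two_add_inv_two]⟩)
    rw [memLp_one_iff_integrable] at this
    exact this
  have hcint : ∀ i, Integrable (c i) μ := fun i => (hc i).integrable le_top
  have hchh : ∀ i j, Integrable (fun x => c i x * (h i x * h j x)) μ := by
    intro i j
    have h1 : MemLp (fun x => h i x * h j x) 1 μ :=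
      memLp_one_iff_integrable.2 (hmul i j)
    have := h1.smul (r := 1) (hc i)
    rw [memLp_one_iff_integrable] at this
    exact this
  -- conditional expectation of A
  have h1 : ∀ i, μ[(fun x => c i x * h i x)|m] =ᵐ[μ] fun x => r i * h i x := by
    intro i
    have heq : (fun x => c i x * h i x) = h i * c i := by
      funext x; simp [mul_comm]
    rw [heq]
    have hint : Integrable (h i * c i) μ := by
      have := hch i; rwa [heq] at this
    refine (condExp_mul_of_stronglyMeasurable_left (hhmeas i) hint (hcint i)).trans ?_
    filter_upwards [hr i] with x hx
    simp only [Pi.mul_apply, hx, mul_comm]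
  have hcondA : μ[A|m] =ᵐ[μ] fun x => ∑ i, r i * h i x := by
    rw [hA]
    have hsum : (fun x => ∑ i, c i x * h i x) = ∑ i, (fun x => c i x * h i x) := by
      funext x; simp
    rw [hsum]
    have h2 := condExp_finset_sum (μ := μ) (m := m)
      (f := fun i x => c i x * h i x) (s := Finset.univ) (fun i _ => hch i)
    refine h2.trans ?_
    have h3 : ∀ᵐ x ∂μ, ∀ i, (μ[(fun y => c i y * h i y)|m]) x = r i * h i x :=
      (ae_all_iff).2 fun i => h1 i
    filter_upwards [h3] with x hx
    simp only [Finset.sum_apply]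
    exact Finset.sum_congr rfl fun i _ => hx i
  -- the inner products ⟨A, h j⟩
  have key : ∀ i j, ∫ x, c i x * (h i x * h j x) ∂μ = r i * G i j := by
    intro i j
    have hmm : StronglyMeasurable[m] (fun x => h i x * h j x) :=
      (hhmeas i).mul (hhmeas j)
    have hint : Integrable ((fun x => h i x * h j x) * c i) μ := by
      have := hchh i j
      have heq : ((fun x => h i x * h j x) * c i) = fun x => c i x * (h i x * h j x) := by
        funext x; simp [mul_comm]
      rwa [heq]
    have hpull := condExp_mul_of_stronglyMeasurable_left hmm hint (hcint i)
    calc ∫ x, c i x * (h i x * h j x) ∂μ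
        = ∫ x, ((fun x => h i x * h j x) * c i) x ∂μ := by
          apply integral_congr_ae; filter_upwards with x; simp [mul_comm]
      _ = ∫ x, (μ[(fun x => h i x * h j x) * c i|m]) x ∂μ := (integral_condExp hm).symm
      _ = ∫ x, (h i x * h j x) * (μ[c i|m]) x ∂μ := integral_congr_ae hpull
      _ = ∫ x, (h i x * h j x) * r i ∂μ := by
          apply integral_congr_ae; filter_upwards [hr i] with x hx; rw [hx]
      _ = r i * G i j := by rw [integral_mul_const, hG, mul_comm]
  have hAh : ∀ j, ∫ x, A x * h j x ∂μ = ∑ i, r i * G i j := by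
    intro j
    rw [hA]
    have heq : ∀ x, (∑ i, c i x * h i x) * h j x = ∑ i, c i x * (h i x * h j x) := by
      intro x; rw [Finset.sum_mul]; exact Finset.sum_congr rfl fun i _ => by ring
    simp only [heq]
    rw [integral_finset_sum _ fun i _ => hchh i j]
    exact Finset.sum_congr rfl fun i _ => key i j
  -- left-hand side
  have hL : ∫ x, ((μ[A|m]) x) ^ 2 ∂μ = ∑ i, ∑ j, r i * r j * G i j := by
    have hstep : ∫ x, ((μ[A|m]) x) ^ 2 ∂μ = ∫ x, (∑ i, r i * h i x) ^ 2 ∂μ := by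
      apply integral_congr_ae; filter_upwards [hcondA] with x hx; rw [hx]
    rw [hstep]
    have hexp : ∀ x : M, (∑ i, r i * h i x) ^ 2
        = ∑ i, ∑ j, (r i * r j) * (h i x * h j x) := by
      intro x
      rw [sq, Finset.sum_mul_sum]
      exact Finset.sum_congr rfl fun i _ => Finset.sum_congr rfl fun j _ => by ring
    simp only [hexp]
    rw [integral_finset_sum _ fun i _ =>
      integrable_finset_sum _ fun j _ => (hmul i j).const_mul _]
    refine Finset.sum_congr rfl fun i _ => ?_
    rw [integral_finset_sum _ fun j _ => (hmul i j).const_mul _]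
    refine Finset.sum_congr rfl fun j _ => ?_
    rw [integral_const_mul, hG]
  -- algebraic identity with the inverse Gram matrix
  have hGsymm : ∀ i j, G j i = G i j := by
    intro i j
    rw [hG, hG]
    exact integral_congr_ae (by filter_upwards with x; ring)
  have hdelta : ∀ i l, ∑ j, G⁻¹ i j * G l j = if i = l then 1 else 0 := by
    intro i l
    have : ∑ j, G⁻¹ i j * G l j = (G⁻¹ * G) i l := by
      rw [Matrix.mul_apply]
      exact Finset.sum_congr rfl fun j _ => by rw [hGsymm l j]
    rw [this, Matrix.nonsing_inv_mul G hGinv, Matrix.one_apply]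
  have hinner : ∀ i, ∑ j, G⁻¹ i j * (∑ l, r l * G l j) = r i := by
    intro i
    have : ∀ j, G⁻¹ i j * (∑ l, r l * G l j) = ∑ l, r l * (G⁻¹ i j * G l j) := by
      intro j; rw [Finset.mul_sum]; exact Finset.sum_congr rfl fun l _ => by ring
    simp only [this]
    rw [Finset.sum_comm]
    have : ∀ l, ∑ j, r l * (G⁻¹ i j * G l j) = r l * (if i = l then 1 else 0) := by
      intro l; rw [← Finset.mul_sum, hdelta]
    simp only [this]
    simp [Finset.sum_ite_eq, eq_comm]
  rw [hL]
  simp only [hAh]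
  have hrhs : ∀ i, ∑ j, (∑ k, r k * G k i) * G⁻¹ i j * (∑ l, r l * G l j)
      = (∑ k, r k * G k i) * r i := by
    intro i
    have : ∀ j, (∑ k, r k * G k i) * G⁻¹ i j * (∑ l, r l * G l j)
        = (∑ k, r k * G k i) * (G⁻¹ i j * (∑ l, r l * G l j)) := fun j => by ring
    simp only [this]
    rw [← Finset.mul_sum, hinner]
  simp only [hrhs]
  rw [Finset.sum_comm (s := Finset.univ) (t := Finset.univ)
    (f := fun i j => r i * r j * G i j)]
  refine Finset.sum_congr rfl fun i _ => ?_
  rw [Finset.sum_mul]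
  refine Finset.sum_congr rfl fun k _ => ?_
  ring
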